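/- The matrix P^S_{S→S+1} on Ω(N,T,S)×Ω(N,T,S+1), defined by P^S_{S→S+1}(X,Y) = ∏_{t=0}^{T-1} [P^{S+1,t}_{t+}(Y(t),Y(t+1))·P^{S+1,t+1}_{S-}(Y(t+1),X(t+1))] / (P^{S+1,t}_{t+}P^{S+1,t+1}_{S-})(Y(t),X(t+1)) when all denominators are positive and 0 otherwise, is stochastic: Σ_{Y ∈ Ω(N,T,S+1)} P^S_{S→S+1}(X,Y) = 1 for all X ∈ Ω(N,T,S). -/

import Mathlib

open Finset
open scoped Classical

noncomputable def poch (a : ℝ) (n : ℕ) : ℝ := ∏ k ∈ Finset.range n, (a + k)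

noncomputable def pairProd {N : ℕ} (f : Fin N → ℤ) : ℝ :=
  ∏ p ∈ Finset.univ.filter (fun p : Fin N × Fin N => p.1 < p.2), ((f p.2 - f p.1 : ℤ) : ℝ)

noncomputable def secX (N T S t : ℕ) : Finset ℤ :=
  Finset.Icc (max 0 ((t : ℤ) + S - T)) (min ((t : ℤ) + N - 1) ((S : ℤ) + N - 1))

noncomputable def Xcal (N T S t : ℕ) : Finset (Fin N → ℤ) :=
  (Fintype.piFinset fun _ => secX N T S t).filter
    (fun f => ∀ i j : Fin N, i < j → f i < f j)

noncomputable def Ptp (N T S t : ℕ) (X Y : Fin N → ℤ) : ℝ :=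
  if ∀ i, Y i = X i ∨ Y i = X i + 1 then
    (pairProd Y *
      ∏ i, (if Y i = X i + 1 then (N : ℝ) + S - X i - 1 else (X i : ℝ) + T - t - S)) /
      (poch ((T : ℝ) - t) N * pairProd X)
  else 0

noncomputable def PSm (N T S t : ℕ) (X Y : Fin N → ℤ) : ℝ :=
  if ∀ i, Y i = X i ∨ Y i = X i - 1 then
    (pairProd Y *
      ∏ i, (if Y i = X i - 1 then (X i : ℝ) else (S : ℝ) + N - 1 - X i)) /
      (poch (S : ℝ) N * pairProd X)
  else 0

/-- A family of paths in Ω(N,T,S), encoded by its sections X(0),…,X(T). -/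
def isPath (N T S : ℕ) (X : ℕ → Fin N → ℤ) : Prop :=
  (∀ i : Fin N, X 0 i = (i : ℤ)) ∧
  (∀ i : Fin N, X T i = (S : ℤ) + i) ∧
  (∀ t < T, ∀ i, X (t + 1) i - X t i = 0 ∨ X (t + 1) i - X t i = 1) ∧
  (∀ t ≤ T, ∀ i j : Fin N, i < j → X t i < X t j)

/-- Extension of a finitely-indexed section family to ℕ. -/
def ext (N T : ℕ) (f : Fin (T + 1) → Fin N → ℤ) : ℕ → Fin N → ℤ :=
  fun t => if h : t < T + 1 then f ⟨t, h⟩ else 0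

/-- Ω(N,T,S) as a Finset (of section families indexed by Fin (T+1)). -/
noncomputable def OmegaF (N T S : ℕ) : Finset (Fin (T + 1) → Fin N → ℤ) :=
  (Fintype.piFinset fun _ => Fintype.piFinset fun _ => Finset.Icc (0 : ℤ) ((S : ℤ) + N)).filter
    (fun f => isPath N T S (ext N T f))

/-- The denominator (P^{S+1,t}_{t+}P^{S+1,t+1}_{S-})(Y(t),X(t+1)). -/
noncomputable def denom (N T S t : ℕ) (X Y : ℕ → Fin N → ℤ) : ℝ :=
  ∑ Z ∈ Xcal N T (S + 1) (t + 1),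
    Ptp N T (S + 1) t (Y t) Z * PSm N T (S + 1) (t + 1) Z (X (t + 1))

/-- The transition matrix P^S_{S→S+1}. -/
noncomputable def PS2 (N T S : ℕ) (X Y : ℕ → Fin N → ℤ) : ℝ :=
  if ∀ t < T, 0 < denom N T S t X Y then
    ∏ t ∈ Finset.range T,
      Ptp N T (S + 1) t (Y t) (Y (t + 1)) *
        PSm N T (S + 1) (t + 1) (Y (t + 1)) (X (t + 1)) / denom N T S t X Y
  else 0
section Aux

lemma poch_pos {a : ℝ} (ha : 0 < a) (n : ℕ) : 0 < poch a n := by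
  unfold poch
  exact Finset.prod_pos fun k _ =>
    add_pos_of_pos_of_nonneg ha (by positivity)

lemma pairProd_pos {N : ℕ} {f : Fin N → ℤ} (hf : ∀ i j : Fin N, i < j → f i < f j) :
    0 < pairProd f := by
  unfold pairProd
  apply Finset.prod_pos
  intro p hp
  simp only [Finset.mem_filter] at hp
  exact_mod_cast sub_pos.mpr (hf p.1 p.2 hp.2)

lemma mem_Xcal_iff {N T S t : ℕ} {f : Fin N → ℤ} :
    f ∈ Xcal N T S t ↔
      (∀ i, (0 ≤ f i ∧ (t:ℤ) + S - T ≤ f i) ∧ (f i ≤ (t:ℤ) + N - 1 ∧ f i ≤ (S:ℤ) + N - 1)) ∧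
      ∀ i j : Fin N, i < j → f i < f j := by
  simp only [Xcal, secX, Finset.mem_filter, Fintype.mem_piFinset, Finset.mem_Icc,
    max_le_iff, le_min_iff]

lemma fin_mono_gap {N : ℕ} {f : Fin N → ℤ} (hf : ∀ i j : Fin N, i < j → f i < f j) :
    ∀ (k : ℕ) (i j : Fin N), (j:ℕ) = (i:ℕ) + k → f i + k ≤ f j := by
  intro k
  induction k with
  | zero =>
    intro i j h
    have : i = j := Fin.ext (by omega)
    simp [this]
  | succ k ih =>
    intro i j h
    have hjlt : (i:ℕ) + k < N := by omega
    have hj' : f i + k ≤ f ⟨(i:ℕ)+k, hjlt⟩ := ih i _ rfl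
    have hlt : f ⟨(i:ℕ)+k, hjlt⟩ < f j := hf _ _ (by simp [Fin.lt_def]; omega)
    push_cast
    omega

lemma Xcal_zero {N T S : ℕ} (hS : S ≤ T) :
    Xcal N T S 0 = {fun i : Fin N => (i:ℤ)} := by
  ext f
  rw [mem_Xcal_iff, Finset.mem_singleton]
  constructor
  · rintro ⟨hb, hm⟩
    funext i
    have hNpos : 0 < N := i.pos
    have h1 : f ⟨0, hNpos⟩ + (i:ℕ) ≤ f i := fin_mono_gap hm i ⟨0, hNpos⟩ i (by simp)
    have h2 := fin_mono_gap hm (N - 1 - (i:ℕ)) i ⟨N-1, by omega⟩ (by simp; omega)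
    have h3 := (hb ⟨0, hNpos⟩).1.1
    have h4 := (hb ⟨N-1, by omega⟩).2.1
    have h5 : (i:ℕ) < N := i.isLt
    omega
  · rintro rfl
    refine ⟨fun i => ?_, fun i j hij => ?_⟩
    · have h5 : (i:ℕ) < N := i.isLt
      have : (S:ℤ) ≤ T := by exact_mod_cast hS
      push_cast
      omega
    · have : (i:ℕ) < (j:ℕ) := hij
      show ((i:ℕ):ℤ) < ((j:ℕ):ℤ)
      exact_mod_cast this

lemma Xcal_T {N T S : ℕ} (hS : S ≤ T) :
    Xcal N T S T = {fun i : Fin N => (S:ℤ) + (i:ℤ)} := by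
  ext f
  rw [mem_Xcal_iff, Finset.mem_singleton]
  constructor
  · rintro ⟨hb, hm⟩
    funext i
    have hNpos : 0 < N := i.pos
    have h1 : f ⟨0, hNpos⟩ + (i:ℕ) ≤ f i := fin_mono_gap hm i ⟨0, hNpos⟩ i (by simp)
    have h2 := fin_mono_gap hm (N - 1 - (i:ℕ)) i ⟨N-1, by omega⟩ (by simp; omega)
    have h3 := (hb ⟨0, hNpos⟩).1.2
    have h4 := (hb ⟨N-1, by omega⟩).2.2
    have h5 : (i:ℕ) < N := i.isLt
    have h6 : (S:ℤ) ≤ T := by exact_mod_cast hS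
    push_cast at h3 h4 ⊢
    omega
  · rintro rfl
    refine ⟨fun i => ?_, fun i j hij => ?_⟩
    · have h5 : (i:ℕ) < N := i.isLt
      have : (S:ℤ) ≤ T := by exact_mod_cast hS
      push_cast
      omega
    · have : (i:ℕ) < (j:ℕ) := hij
      show (S:ℤ) + ((i:ℕ):ℤ) < (S:ℤ) + ((j:ℕ):ℤ)
      have := Int.ofNat_lt.mpr this
      omega

end Aux
lemma path_bounds {N T S : ℕ} {X : ℕ → Fin N → ℤ} (hX : isPath N T S X) :
    ∀ b, b ≤ T → ∀ a, a ≤ b → ∀ i, X a i ≤ X b i ∧ X b i ≤ X a i + ((b:ℤ) - a) := by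
  intro b
  induction b with
  | zero =>
    intro _ a ha i
    have : a = 0 := by omega
    subst this; simp
  | succ b ih =>
    intro hb a ha i
    rcases Nat.lt_or_ge a (b+1) with h | h
    · have h1 := ih (by omega) a (by omega) i
      have h2 := hX.2.2.1 b (by omega) i
      push_cast
      rcases h2 with h2 | h2 <;> constructor <;> push_cast at h1 <;> omega
    · have : a = b+1 := by omega
      subst this; simp

lemma path_mem_Xcal {N T S : ℕ} {X : ℕ → Fin N → ℤ} (hX : isPath N T S X)
    {t : ℕ} (ht : t ≤ T) : X t ∈ Xcal N T S t := by
  rw [mem_Xcal_iff]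
  refine ⟨fun i => ?_, hX.2.2.2 t ht⟩
  have h0 := path_bounds hX t ht 0 (Nat.zero_le _) i
  have hT := path_bounds hX T le_rfl t ht i
  have e0 : X 0 i = ((i:ℕ):ℤ) := hX.1 i
  have eT : X T i = (S:ℤ) + ((i:ℕ):ℤ) := hX.2.1 i
  have hi : (i:ℕ) < N := i.isLt
  refine ⟨⟨?_, ?_⟩, ?_, ?_⟩ <;> omega

lemma Ptp_nonneg {N T S t : ℕ} (ht : t < T) {Y Z : Fin N → ℤ}
    (hY : Y ∈ Xcal N T (S+1) t) (hZ : 0 ≤ pairProd Z) :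
    0 ≤ Ptp N T (S+1) t Y Z := by
  rw [mem_Xcal_iff] at hY
  unfold Ptp
  split
  · apply div_nonneg
    · refine mul_nonneg hZ (Finset.prod_nonneg fun i _ => ?_)
      obtain ⟨⟨h0, hl⟩, _, hu2⟩ := hY.1 i
      split
      · have key : (Y i : ℤ) ≤ (S:ℤ) + N := by push_cast at hu2; omega
        have : ((Y i : ℤ) : ℝ) ≤ (((S:ℤ) + N : ℤ) : ℝ) := Int.cast_le.mpr key
        push_cast at this ⊢
        linarith
      · have key : ((t:ℤ) + (S:ℤ) + 1 - T : ℤ) ≤ Y i := by push_cast at hl; omega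
        have : (((t:ℤ) + (S:ℤ) + 1 - T : ℤ) : ℝ) ≤ ((Y i : ℤ) : ℝ) := Int.cast_le.mpr key
        push_cast at this ⊢
        linarith
    · apply mul_nonneg _ (pairProd_pos hY.2).le
      refine (poch_pos ?_ N).le
      have : (t:ℝ) < T := by exact_mod_cast ht
      linarith
  · exact le_refl 0

lemma PSm_nonneg {N T S t : ℕ} {Z W : Fin N → ℤ}
    (hZ : Z ∈ Xcal N T (S+1) t) (hW : 0 ≤ pairProd W) :
    0 ≤ PSm N T (S+1) t Z W := by
  rw [mem_Xcal_iff] at hZ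
  unfold PSm
  split
  · apply div_nonneg
    · refine mul_nonneg hW (Finset.prod_nonneg fun i _ => ?_)
      obtain ⟨⟨h0, _⟩, _, hu⟩ := hZ.1 i
      split
      · exact_mod_cast h0
      · have key : (Z i : ℤ) ≤ (S:ℤ) + N := by push_cast at hu; omega
        have : ((Z i : ℤ) : ℝ) ≤ (((S:ℤ) + N : ℤ) : ℝ) := Int.cast_le.mpr key
        push_cast at this ⊢
        linarith
    · refine mul_nonneg (poch_pos ?_ N).le (pairProd_pos hZ.2).le
      have : (0:ℝ) < (S:ℝ) + 1 := by positivity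
      push_cast
      linarith
  · exact le_refl 0

lemma term_nonneg {N T S t : ℕ} (ht : t < T) {X : ℕ → Fin N → ℤ} {Y Z : Fin N → ℤ}
    (hY : Y ∈ Xcal N T (S+1) t) (hZ : Z ∈ Xcal N T (S+1) (t+1))
    (hXm : ∀ i j : Fin N, i < j → X (t+1) i < X (t+1) j) :
    0 ≤ Ptp N T (S+1) t Y Z * PSm N T (S+1) (t+1) Z (X (t+1)) :=
  mul_nonneg (Ptp_nonneg ht hY (pairProd_pos (mem_Xcal_iff.mp hZ).2).le)
    (PSm_nonneg hZ (pairProd_pos hXm).le)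

lemma denom_nonneg {N T S t : ℕ} (ht : t < T) {X W : ℕ → Fin N → ℤ}
    (hW : W t ∈ Xcal N T (S+1) t)
    (hXm : ∀ i j : Fin N, i < j → X (t+1) i < X (t+1) j) :
    0 ≤ denom N T S t X W :=
  Finset.sum_nonneg fun Z hZ => term_nonneg ht hW hZ hXm

lemma term_le_denom {N T S t : ℕ} (ht : t < T) {X W : ℕ → Fin N → ℤ}
    (hW : W t ∈ Xcal N T (S+1) t) (hW1 : W (t+1) ∈ Xcal N T (S+1) (t+1))
    (hXm : ∀ i j : Fin N, i < j → X (t+1) i < X (t+1) j) :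
    Ptp N T (S+1) t (W t) (W (t+1)) * PSm N T (S+1) (t+1) (W (t+1)) (X (t+1))
      ≤ denom N T S t X W :=
  Finset.single_le_sum (fun Z hZ => term_nonneg ht hW hZ hXm) hW1
lemma denom_pos {N T S : ℕ} (hS : S + 1 ≤ T) {t : ℕ} (ht : t < T)
    {X W : ℕ → Fin N → ℤ} (hX : isPath N T S X)
    (hWmem : W t ∈ Xcal N T (S+1) t)
    (hadj : ∀ i, W t i = X t i ∨ W t i = X t i + 1) :
    0 < denom N T S t X W := by
  classical
  have hXt1mem : X (t+1) ∈ Xcal N T S (t+1) := path_mem_Xcal hX (by omega)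
  have hW := mem_Xcal_iff.mp hWmem
  have hXt1 := mem_Xcal_iff.mp hXt1mem
  have hstep := hX.2.2.1 t ht
  -- total versions of the sections
  set y : Fin N → ℤ := W t with hy
  set x' : Fin N → ℤ := X (t+1) with hx'
  let yn : ℕ → ℤ := fun j => if h : j < N then y ⟨j, h⟩ else 0
  let xn : ℕ → ℤ := fun j => if h : j < N then x' ⟨j, h⟩ else 0
  let Lz : ℤ := (t:ℤ) + S + 2 - T
  let zf : ℕ → ℤ := fun j => Nat.rec (max (max (yn 0) (xn 0)) Lz)
      (fun j prev => max (max (yn (j+1)) (xn (j+1))) (max Lz (prev + 1))) j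
  have hyn : ∀ (j : ℕ) (h : j < N), yn j = y ⟨j, h⟩ := fun j h => dif_pos h
  have hxn : ∀ (j : ℕ) (h : j < N), xn j = x' ⟨j, h⟩ := fun j h => dif_pos h
  have hyn2 : ∀ i : Fin N, yn ↑i = y i := fun i => dif_pos i.isLt
  have hxn2 : ∀ i : Fin N, xn ↑i = x' i := fun i => dif_pos i.isLt
  -- basic facts about yn, xn for j < N
  have key : ∀ j, j < N →
      (yn j ≤ xn j + 1 ∧ xn j ≤ yn j + 1) ∧
      (0 ≤ yn j ∧ (t:ℤ) + S + 1 - T ≤ yn j ∧ yn j ≤ (t:ℤ) + N - 1 ∧ yn j ≤ (S:ℤ) + N) ∧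
      (0 ≤ xn j ∧ (t:ℤ) + 1 + S - T ≤ xn j ∧ xn j ≤ (t:ℤ) + N ∧ xn j ≤ (S:ℤ) + N - 1) := by
    intro j h
    rw [hyn j h, hxn j h]
    have a1 := hadj ⟨j, h⟩
    have a2 := hstep ⟨j, h⟩
    have b1 := hW.1 ⟨j, h⟩
    have b2 := hXt1.1 ⟨j, h⟩
    push_cast at b1 b2
    refine ⟨⟨?_, ?_⟩, ⟨?_, ?_, ?_, ?_⟩, ⟨?_, ?_, ?_, ?_⟩⟩ <;> omega
  have hzsucc : ∀ j, zf j + 1 ≤ zf (j+1) := fun j =>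
    le_trans (le_max_right Lz _) (le_max_right _ _)
  -- the invariant
  have hinv : ∀ j, j < N →
      yn j ≤ zf j ∧ xn j ≤ zf j ∧ Lz ≤ zf j ∧ zf j ≤ yn j + 1 ∧ zf j ≤ xn j + 1 := by
    intro j
    induction j with
    | zero =>
      intro h
      obtain ⟨⟨c1, c2⟩, ⟨d1, d2, _, _⟩, ⟨e1, e2, _, _⟩⟩ := key 0 h
      have h1 : yn 0 ≤ zf 0 := le_trans (le_max_left _ _) (le_max_left _ _)
      have h2 : xn 0 ≤ zf 0 := le_trans (le_max_right _ _) (le_max_left _ _)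
      have h3 : Lz ≤ zf 0 := le_max_right _ _
      have h4 : zf 0 ≤ yn 0 + 1 := by
        refine max_le (max_le (by omega) (by omega)) ?_
        show Lz ≤ yn 0 + 1
        omega
      have h5 : zf 0 ≤ xn 0 + 1 := by
        refine max_le (max_le (by omega) (by omega)) ?_
        show Lz ≤ xn 0 + 1
        omega
      exact ⟨h1, h2, h3, h4, h5⟩
    | succ j ih =>
      intro h
      obtain ⟨ihy, ihx, ihL, ihy1, ihx1⟩ := ih (by omega)
      obtain ⟨⟨c1, c2⟩, ⟨d1, d2, _, _⟩, ⟨e1, e2, _, _⟩⟩ := key (j+1) h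
      have hjN : j < N := by omega
      have hmy : yn j + 1 ≤ yn (j+1) := by
        have e1 : yn j = y ⟨j, hjN⟩ := dif_pos hjN
        have e2 : yn (j+1) = y ⟨j+1, h⟩ := dif_pos h
        have e3 := hW.2 ⟨j, hjN⟩ ⟨j+1, h⟩ (by simp [Fin.lt_def])
        omega
      have hmx : xn j + 1 ≤ xn (j+1) := by
        have e1 : xn j = x' ⟨j, hjN⟩ := dif_pos hjN
        have e2 : xn (j+1) = x' ⟨j+1, h⟩ := dif_pos h
        have e3 := hXt1.2 ⟨j, hjN⟩ ⟨j+1, h⟩ (by simp [Fin.lt_def])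
        omega
      have h1 : yn (j+1) ≤ zf (j+1) := le_trans (le_max_left _ _) (le_max_left _ _)
      have h2 : xn (j+1) ≤ zf (j+1) := le_trans (le_max_right _ _) (le_max_left _ _)
      have h3 : Lz ≤ zf (j+1) := le_trans (le_max_left _ _) (le_max_right _ _)
      have h4 : zf (j+1) ≤ yn (j+1) + 1 := by
        have u1 : zf j + 1 ≤ yn (j+1) + 1 := by omega
        have u2 : Lz ≤ yn (j+1) + 1 := by omega
        exact max_le (max_le (by omega) (by omega)) (max_le u2 u1)
      have h5 : zf (j+1) ≤ xn (j+1) + 1 := by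
        have u1 : zf j + 1 ≤ xn (j+1) + 1 := by omega
        have u2 : Lz ≤ xn (j+1) + 1 := by omega
        exact max_le (max_le (by omega) (by omega)) (max_le u2 u1)
      exact ⟨h1, h2, h3, h4, h5⟩
  have hzmonoN : StrictMono zf := strictMono_nat_of_lt_succ (fun n => by
    have := hzsucc n; omega)
  set Z : Fin N → ℤ := fun i => zf i with hZdef
  have hZmono : ∀ i j : Fin N, i < j → Z i < Z j := fun i j hij => hzmonoN hij
  have hinv' : ∀ i : Fin N, y i ≤ Z i ∧ x' i ≤ Z i ∧ Lz ≤ Z i ∧ Z i ≤ y i + 1 ∧ Z i ≤ x' i + 1 := by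
    intro i
    have h := hinv i i.isLt
    rw [hyn i i.isLt, hxn i i.isLt] at h
    simpa using h
  have hZmem : Z ∈ Xcal N T (S+1) (t+1) := by
    rw [mem_Xcal_iff]
    refine ⟨fun i => ?_, hZmono⟩
    obtain ⟨q1, q2, q3, q4, q5⟩ := hinv' i
    obtain ⟨_, ⟨d1, d2, d3, _⟩, ⟨_, _, _, e4⟩⟩ := key i i.isLt
    rw [hyn2 i] at d1 d3
    rw [hxn2 i] at e4
    have : Lz = (t:ℤ) + S + 2 - T := rfl
    push_cast
    refine ⟨⟨by omega, by omega⟩, by omega, by omega⟩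
  -- positivity of the term at Z
  have hyXcalmono := hW.2
  have hx'mono := hXt1.2
  have hPtp : 0 < Ptp N T (S+1) t y Z := by
    unfold Ptp
    rw [if_pos (fun i => by have := hinv' i; omega)]
    apply div_pos
    · refine mul_pos (pairProd_pos hZmono) (Finset.prod_pos fun i _ => ?_)
      obtain ⟨q1, q2, q3, q4, q5⟩ := hinv' i
      obtain ⟨_, _, ⟨_, _, _, e4⟩⟩ := key i i.isLt
      rw [hxn2 i] at e4
      split
      · rename_i hcase
        have key2 : (y i : ℤ) ≤ (S:ℤ) + N - 1 := by omega
        have : ((y i : ℤ) : ℝ) ≤ (((S:ℤ) + N - 1 : ℤ) : ℝ) := Int.cast_le.mpr key2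
        push_cast at this ⊢
        linarith
      · rename_i hcase
        have hZeq : Z i = y i := by omega
        have key2 : ((t:ℤ) + S + 2 - T : ℤ) ≤ y i := by
          have : Lz = (t:ℤ) + S + 2 - T := rfl
          omega
        have : (((t:ℤ) + S + 2 - T : ℤ) : ℝ) ≤ ((y i : ℤ) : ℝ) := Int.cast_le.mpr key2
        push_cast at this ⊢
        linarith
    · refine mul_pos (poch_pos ?_ N) (pairProd_pos hyXcalmono)
      have : (t:ℝ) < T := by exact_mod_cast ht
      linarith
  have hPSm : 0 < PSm N T (S+1) (t+1) Z x' := by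
    unfold PSm
    rw [if_pos (fun i => by have := hinv' i; omega)]
    apply div_pos
    · refine mul_pos (pairProd_pos hx'mono) (Finset.prod_pos fun i _ => ?_)
      obtain ⟨q1, q2, q3, q4, q5⟩ := hinv' i
      obtain ⟨_, _, ⟨e1, _, _, e4⟩⟩ := key i i.isLt
      rw [hxn2 i] at e1 e4
      split
      · rename_i hcase
        exact_mod_cast (show (0:ℤ) < Z i by omega)
      · rename_i hcase
        have hZeq : Z i = x' i := by omega
        have key2 : (Int.cast (Z i) : ℝ) ≤ (S:ℝ) + (N:ℝ) - 1 := by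
          exact_mod_cast (show (Z i : ℤ) ≤ (S:ℤ) + N - 1 by omega)
        push_cast
        linarith
    · refine mul_pos (poch_pos ?_ N) (pairProd_pos hZmono)
      have : (0:ℝ) < (S:ℝ) + 1 := by positivity
      push_cast
      linarith
  have hterm : 0 < Ptp N T (S+1) t y Z * PSm N T (S+1) (t+1) Z x' := mul_pos hPtp hPSm
  refine lt_of_lt_of_le hterm ?_
  unfold denom
  rw [← hy, ← hx']
  exact Finset.single_le_sum
    (fun Z' hZ' => term_nonneg ht hWmem hZ' hx'mono) hZmem
noncomputable def Gr (N T S : ℕ) : ℕ → Finset (ℕ → Fin N → ℤ)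
  | 0 => (Xcal N T S 0).image (fun y => fun t => if t = 0 then y else 0)
  | n+1 => ((Gr N T S n) ×ˢ (Xcal N T S (n+1))).image
      (fun p => fun t => if t = n+1 then p.2 else p.1 t)

lemma mem_Gr_iff {N T S : ℕ} : ∀ {n : ℕ} {W : ℕ → Fin N → ℤ},
    W ∈ Gr N T S n ↔ ((∀ t, t ≤ n → W t ∈ Xcal N T S t) ∧ ∀ t, n < t → W t = 0) := by
  intro n
  induction n with
  | zero =>
    intro W
    simp only [Gr, Finset.mem_image]
    constructor
    · rintro ⟨y, hy, rfl⟩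
      refine ⟨fun t ht => ?_, fun t ht => ?_⟩
      · have : t = 0 := by omega
        subst this
        simpa using hy
      · show (if t = 0 then y else 0) = 0
        rw [if_neg (by omega : ¬ t = 0)]
    · rintro ⟨h1, h2⟩
      refine ⟨W 0, h1 0 le_rfl, ?_⟩
      funext t
      by_cases h : t = 0
      · subst h; simp
      · simp [h, (h2 t (by omega)).symm]
  | succ n ih =>
    intro W
    simp only [Gr, Finset.mem_image, Finset.mem_product]
    constructor
    · rintro ⟨p, ⟨hp1, hp2⟩, rfl⟩
      obtain ⟨g1, g2⟩ := ih.mp hp1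
      refine ⟨fun t ht => ?_, fun t ht => ?_⟩
      · by_cases h : t = n+1
        · subst h; simpa using hp2
        · have h' : t ≤ n := by omega
          simpa [h] using g1 t h'
      · have h1 : t ≠ n+1 := by omega
        simpa [h1] using g2 t (by omega)
    · rintro ⟨h1, h2⟩
      refine ⟨(fun t => if t = n+1 then 0 else W t, W (n+1)),
        ⟨ih.mpr ⟨fun t ht => ?_, fun t ht => ?_⟩, h1 _ le_rfl⟩, ?_⟩
      · show (if t = n+1 then 0 else W t) ∈ Xcal N T S t
        rw [if_neg (by omega : ¬ t = n+1)]
        exact h1 t (by omega)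
      · show (if t = n+1 then 0 else W t) = 0
        by_cases h : t = n+1
        · rw [if_pos h]
        · rw [if_neg h]
          exact h2 t (by omega)
      · funext t
        show (if t = n+1 then W (n+1) else if t = n+1 then 0 else W t) = W t
        by_cases h : t = n+1
        · rw [if_pos h, h]
        · rw [if_neg h, if_neg h]

lemma sum_Gr_succ {N T S n : ℕ} (F : (ℕ → Fin N → ℤ) → ℝ) :
    ∑ W ∈ Gr N T S (n+1), F W
      = ∑ W ∈ Gr N T S n, ∑ z ∈ Xcal N T S (n+1), F (fun t => if t = n+1 then z else W t) := by
  rw [show Gr N T S (n+1) = ((Gr N T S n) ×ˢ (Xcal N T S (n+1))).image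
      (fun p => fun t => if t = n+1 then p.2 else p.1 t) from rfl]
  rw [Finset.sum_image, Finset.sum_product]
  intro p hp q hq hpq
  simp only [Finset.mem_coe, Finset.mem_product] at hp hq
  have e2 : p.2 = q.2 := by
    have := congrFun hpq (n+1)
    simpa using this
  have e1 : p.1 = q.1 := by
    funext t
    rcases Nat.lt_or_ge n t with h | h
    · rw [(mem_Gr_iff.mp hp.1).2 t h, (mem_Gr_iff.mp hq.1).2 t h]
    · have ht : t ≠ n+1 := by omega
      have := congrFun hpq t
      simpa [ht] using this
  exact Prod.ext e1 e2
lemma chain {N T S : ℕ} (hS : S + 1 ≤ T) {X : ℕ → Fin N → ℤ} (hX : isPath N T S X) :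
    ∀ n, n ≤ T →
      (∑ W ∈ Gr N T (S+1) n, ∏ t ∈ Finset.range n,
        Ptp N T (S+1) t (W t) (W (t+1)) * PSm N T (S+1) (t+1) (W (t+1)) (X (t+1)) /
          denom N T S t X W) = 1 := by
  intro n
  induction n with
  | zero =>
    intro _
    rw [show Gr N T (S+1) 0
        = (Xcal N T (S+1) 0).image (fun y => fun t => if t = 0 then y else 0) from rfl]
    rw [Xcal_zero hS]
    simp
  | succ n ih =>
    intro hn
    have hnT : n < T := hn
    rw [sum_Gr_succ]
    have key : ∀ W ∈ Gr N T (S+1) n,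
        (∑ z ∈ Xcal N T (S+1) (n+1), ∏ t ∈ Finset.range (n+1),
          Ptp N T (S+1) t (if t = n+1 then z else W t)
              (if t+1 = n+1 then z else W (t+1)) *
            PSm N T (S+1) (t+1) (if t+1 = n+1 then z else W (t+1)) (X (t+1)) /
              denom N T S t X (fun u => if u = n+1 then z else W u))
        = ∏ t ∈ Finset.range n,
            Ptp N T (S+1) t (W t) (W (t+1)) * PSm N T (S+1) (t+1) (W (t+1)) (X (t+1)) /
              denom N T S t X W := by
      intro W hW
      have hWn : W n ∈ Xcal N T (S+1) n := (mem_Gr_iff.mp hW).1 n le_rfl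
      have hprod : ∀ z, (∏ t ∈ Finset.range (n+1),
          Ptp N T (S+1) t (if t = n+1 then z else W t)
              (if t+1 = n+1 then z else W (t+1)) *
            PSm N T (S+1) (t+1) (if t+1 = n+1 then z else W (t+1)) (X (t+1)) /
              denom N T S t X (fun u => if u = n+1 then z else W u))
          = (∏ t ∈ Finset.range n,
              Ptp N T (S+1) t (W t) (W (t+1)) * PSm N T (S+1) (t+1) (W (t+1)) (X (t+1)) /
                denom N T S t X W) *
            (Ptp N T (S+1) n (W n) z * PSm N T (S+1) (n+1) z (X (n+1)) /
              denom N T S n X W) := by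
        intro z
        rw [Finset.prod_range_succ]
        congr 1
        · apply Finset.prod_congr rfl
          intro t htmem
          have ht : t < n := Finset.mem_range.mp htmem
          have e1 : (if t = n+1 then z else W t) = W t := if_neg (by omega)
          have e2 : (if t+1 = n+1 then z else W (t+1)) = W (t+1) := if_neg (by omega)
          have e3 : denom N T S t X (fun u => if u = n+1 then z else W u)
              = denom N T S t X W := by
            unfold denom
            rw [show (fun u => if u = n+1 then z else W u) t = W t from if_neg (by omega)]
          rw [e1, e2, e3]
        · have e1 : (if n = n+1 then z else W n) = W n := if_neg (by omega)
          have e2 : (if n+1 = n+1 then z else W (n+1)) = z := if_pos rfl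
          have e3 : denom N T S n X (fun u => if u = n+1 then z else W u)
              = denom N T S n X W := by
            unfold denom
            rw [show (fun u => if u = n+1 then z else W u) n = W n from if_neg (by omega)]
          rw [e1, e2, e3]
      rw [Finset.sum_congr rfl (fun z _ => hprod z), ← Finset.mul_sum]
      by_cases hzero : (∏ t ∈ Finset.range n,
          Ptp N T (S+1) t (W t) (W (t+1)) * PSm N T (S+1) (t+1) (W (t+1)) (X (t+1)) /
            denom N T S t X W) = 0
      · rw [hzero, zero_mul]
      · have hadj : ∀ i, W n i = X n i ∨ W n i = X n i + 1 := by
          rcases Nat.eq_zero_or_pos n with hn0 | hn0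
          · subst hn0
            have h0 : W 0 ∈ Xcal N T (S+1) 0 := (mem_Gr_iff.mp hW).1 0 le_rfl
            rw [Xcal_zero hS, Finset.mem_singleton] at h0
            intro i
            left
            rw [h0, hX.1 i]
          · obtain ⟨m, rfl⟩ : ∃ m, n = m+1 := ⟨n-1, by omega⟩
            have hfac : Ptp N T (S+1) m (W m) (W (m+1)) *
                PSm N T (S+1) (m+1) (W (m+1)) (X (m+1)) / denom N T S m X W ≠ 0 := by
              intro h0
              exact hzero (Finset.prod_eq_zero (Finset.mem_range.mpr (Nat.lt_succ_self m)) h0)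
            have hPSmne : PSm N T (S+1) (m+1) (W (m+1)) (X (m+1)) ≠ 0 := by
              intro h0
              apply hfac
              rw [h0, mul_zero, zero_div]
            have hcond : ∀ i, X (m+1) i = W (m+1) i ∨ X (m+1) i = W (m+1) i - 1 := by
              by_contra hc
              exact hPSmne (by unfold PSm; rw [if_neg hc])
            intro i
            have := hcond i
            omega
        have hdpos : 0 < denom N T S n X W := denom_pos hS hnT hX hWn hadj
        have hsum : (∑ z ∈ Xcal N T (S+1) (n+1),
            Ptp N T (S+1) n (W n) z * PSm N T (S+1) (n+1) z (X (n+1)) /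
              denom N T S n X W) = 1 := by
          rw [← Finset.sum_div]
          exact div_self (ne_of_gt hdpos)
        rw [hsum, mul_one]
    rw [Finset.sum_congr rfl key]
    exact ih (by omega)
lemma PS2_eq {N T S : ℕ} (hS : S+1 ≤ T) {X : ℕ → Fin N → ℤ} (hX : isPath N T S X)
    {W : ℕ → Fin N → ℤ} (hW : W ∈ Gr N T (S+1) T) :
    PS2 N T S X W = ∏ t ∈ Finset.range T,
      Ptp N T (S+1) t (W t) (W (t+1)) * PSm N T (S+1) (t+1) (W (t+1)) (X (t+1)) /
        denom N T S t X W := by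
  unfold PS2
  split
  · rfl
  · rename_i h
    push_neg at h
    obtain ⟨r, hr, hle⟩ := h
    have hWr : W r ∈ Xcal N T (S+1) r := (mem_Gr_iff.mp hW).1 r (by omega)
    have hWr1 : W (r+1) ∈ Xcal N T (S+1) (r+1) := (mem_Gr_iff.mp hW).1 (r+1) (by omega)
    have hXm := hX.2.2.2 (r+1) (by omega)
    have hd0 : denom N T S r X W = 0 := le_antisymm hle (denom_nonneg hr hWr hXm)
    have hnum : Ptp N T (S+1) r (W r) (W (r+1)) *
        PSm N T (S+1) (r+1) (W (r+1)) (X (r+1)) = 0 :=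
      le_antisymm (hd0 ▸ term_le_denom hr hWr hWr1 hXm) (term_nonneg hr hWr hWr1 hXm)
    symm
    apply Finset.prod_eq_zero (Finset.mem_range.mpr hr)
    rw [hnum, zero_div]

lemma F_zero {N T S : ℕ} (hS : S+1 ≤ T) {X W : ℕ → Fin N → ℤ}
    (hW : W ∈ Gr N T (S+1) T) (hnp : ¬ isPath N T (S+1) W) :
    (∏ t ∈ Finset.range T,
      Ptp N T (S+1) t (W t) (W (t+1)) * PSm N T (S+1) (t+1) (W (t+1)) (X (t+1)) /
        denom N T S t X W) = 0 := by
  obtain ⟨g1, g2⟩ := mem_Gr_iff.mp hW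
  have hA : ∀ i : Fin N, W 0 i = (i:ℤ) := by
    have h0 := g1 0 (by omega)
    rw [Xcal_zero hS, Finset.mem_singleton] at h0
    intro i; rw [h0]
  have hB : ∀ i : Fin N, W T i = ((S+1:ℕ):ℤ) + i := by
    have h0 := g1 T le_rfl
    rw [Xcal_T hS, Finset.mem_singleton] at h0
    intro i; rw [h0]
  have hD : ∀ t, t ≤ T → ∀ i j : Fin N, i < j → W t i < W t j :=
    fun t ht => (mem_Xcal_iff.mp (g1 t ht)).2
  have hC : ¬ (∀ t, t < T → ∀ i, W (t+1) i - W t i = 0 ∨ W (t+1) i - W t i = 1) := by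
    intro hC
    exact hnp ⟨hA, hB, hC, hD⟩
  push_neg at hC
  obtain ⟨r, hr, i, hi1, hi2⟩ := hC
  apply Finset.prod_eq_zero (Finset.mem_range.mpr hr)
  have hz : Ptp N T (S+1) r (W r) (W (r+1)) = 0 := by
    unfold Ptp
    rw [if_neg]
    intro hcond
    rcases hcond i with h | h <;> omega
  rw [hz, zero_mul, zero_div]

/-- P^S_{S→S+1} is a stochastic matrix on Ω(N,T,S) × Ω(N,T,S+1). -/
theorem PS2_stochastic (N T S : ℕ) (hN : 1 ≤ N) (hS : S + 1 ≤ T)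
    (X : ℕ → Fin N → ℤ) (hX : isPath N T S X) :
    ∑ Y ∈ OmegaF N T (S + 1), PS2 N T S X (ext N T Y) = 1 := by
  classical
  have hext : ∀ W ∈ Gr N T (S+1) T, ext N T (fun t : Fin (T+1) => W ↑t) = W := by
    intro W hW
    funext t
    by_cases h : t < T + 1
    · exact dif_pos h
    · exact (dif_neg h).trans ((mem_Gr_iff.mp hW).2 t (by omega)).symm
  have hmemOm : ∀ Y, Y ∈ OmegaF N T (S+1) ↔
      ((∀ t : Fin (T+1), ∀ i, Y t i ∈ Finset.Icc (0:ℤ) (((S+1:ℕ):ℤ) + N)) ∧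
        isPath N T (S+1) (ext N T Y)) := by
    intro Y
    simp [OmegaF, Fintype.mem_piFinset]
  have hstep1 : ∑ Y ∈ OmegaF N T (S+1), PS2 N T S X (ext N T Y)
      = ∑ W ∈ (Gr N T (S+1) T).filter (fun W => isPath N T (S+1) W), PS2 N T S X W := by
    apply Finset.sum_nbij' (i := fun Y => ext N T Y) (j := fun W => fun t : Fin (T+1) => W ↑t)
    · intro Y hY
      have hP : isPath N T (S+1) (ext N T Y) := ((hmemOm Y).mp hY).2
      rw [Finset.mem_filter]
      refine ⟨mem_Gr_iff.mpr ⟨fun t ht => path_mem_Xcal hP ht, fun t ht => ?_⟩, hP⟩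
      exact dif_neg (by omega : ¬ t < T + 1)
    · intro W hW
      rw [Finset.mem_filter] at hW
      rw [hmemOm]
      constructor
      · intro t i
        have hmem := (mem_Gr_iff.mp hW.1).1 t (by omega)
        obtain ⟨⟨ha, _⟩, _, hb⟩ := (mem_Xcal_iff.mp hmem).1 i
        rw [Finset.mem_Icc]
        constructor
        · exact ha
        · push_cast at hb ⊢
          omega
      · rw [hext W hW.1]
        exact hW.2
    · intro Y hY
      funext t
      exact dif_pos t.isLt
    · intro W hW
      rw [Finset.mem_filter] at hW
      exact hext W hW.1
    · intro Y hY
      rfl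
  rw [hstep1]
  have hstep2 : ∑ W ∈ (Gr N T (S+1) T).filter (fun W => isPath N T (S+1) W), PS2 N T S X W
      = ∑ W ∈ (Gr N T (S+1) T).filter (fun W => isPath N T (S+1) W),
          ∏ t ∈ Finset.range T,
            Ptp N T (S+1) t (W t) (W (t+1)) * PSm N T (S+1) (t+1) (W (t+1)) (X (t+1)) /
              denom N T S t X W :=
    Finset.sum_congr rfl fun W hW => PS2_eq hS hX (Finset.mem_filter.mp hW).1
  rw [hstep2]
  have hstep3 : ∑ W ∈ (Gr N T (S+1) T).filter (fun W => isPath N T (S+1) W),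
          (∏ t ∈ Finset.range T,
            Ptp N T (S+1) t (W t) (W (t+1)) * PSm N T (S+1) (t+1) (W (t+1)) (X (t+1)) /
              denom N T S t X W)
      = ∑ W ∈ Gr N T (S+1) T,
          ∏ t ∈ Finset.range T,
            Ptp N T (S+1) t (W t) (W (t+1)) * PSm N T (S+1) (t+1) (W (t+1)) (X (t+1)) /
              denom N T S t X W := by
    apply Finset.sum_subset (Finset.filter_subset _ _)
    intro W hW hnW
    refine F_zero hS hW ?_
    intro hP
    exact hnW (Finset.mem_filter.mpr ⟨hW, hP⟩)
  rw [hstep3]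
  exact chain hS hX T le_rfl
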